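/- For every even integer n ≥ 4, the maximum size of a family of Hamiltonian paths of the complete graph K_n on vertex set {1,…,n} such that the union of any two paths in the family contains an odd cycle equals the number of balanced bipartitions of {1,…,n}, namely (1/2)·C(n, n/2). -/

import Mathlib

open SimpleGraph

/-- `G` contains a cycle of length `k` as a subgraph. -/
def ContainsCycleLen {V : Type*} (G : SimpleGraph V) (k : ℕ) : Prop :=
  ∃ (u : V) (w : G.Walk u u), w.IsCycle ∧ w.length = k

/-- `H` is a Hamiltonian path of the complete graph on `Fin n`:
it is the path graph on `n` vertices up to a relabeling of the vertices. -/
def IsHamPathGraph {n : ℕ} (H : SimpleGraph (Fin n)) : Prop :=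
  ∃ σ : Equiv.Perm (Fin n), ∀ a b, H.Adj a b ↔ (pathGraph n).Adj (σ a) (σ b)

/-- The maximum size of a family of Hamiltonian paths of `K_n` that are
pairwise `C_k`-creating. -/
noncomputable def Hnum (n k : ℕ) : ℕ :=
  sSup {m | ∃ F : Finset (SimpleGraph (Fin n)), F.card = m ∧
    (∀ G ∈ F, IsHamPathGraph G) ∧
    ∀ G₁ ∈ F, ∀ G₂ ∈ F, G₁ ≠ G₂ → ContainsCycleLen (G₁ ⊔ G₂) k}

/-- `H` is a perfect matching (as a graph): every vertex has a unique neighbor. -/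
def IsPMGraph {V : Type*} (H : SimpleGraph V) : Prop :=
  ∀ v : V, ∃! w : V, H.Adj v w

/-- The maximum size of a family of perfect matchings of `K_n` that are
pairwise `C_k`-creating. -/
noncomputable def Mnum (n k : ℕ) : ℕ :=
  sSup {m | ∃ F : Finset (SimpleGraph (Fin n)), F.card = m ∧
    (∀ G ∈ F, IsPMGraph G) ∧
    ∀ G₁ ∈ F, ∀ G₂ ∈ F, G₁ ≠ G₂ → ContainsCycleLen (G₁ ⊔ G₂) k}

open Finset


namespace OddCyc

variable {V : Type*} {G : SimpleGraph V}

lemma coloring_agree (hc : G.Preconnected) (C C' : G.Coloring Bool) (u v : V) :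
    (C v = C u) ↔ (C' v = C' u) := by
  obtain ⟨w⟩ := hc u v
  have h1 := C.even_length_iff_congr w
  have h2 := C'.even_length_iff_congr w
  have e1 : (C v = C u) ↔ Even w.length := by
    rw [h1, Bool.eq_iff_iff]; tauto
  have e2 : (C' v = C' u) ↔ Even w.length := by
    rw [h2, Bool.eq_iff_iff]; tauto
  rw [e1, e2]

open scoped Classical in
/-- the bipartition side containing `0` of a connected 2-colorable graph -/
noncomputable def fbip {n : ℕ} [NeZero n] (G : SimpleGraph (Fin n)) : Finset (Fin n) :=
  if h : Nonempty (G.Coloring Bool) then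
    Finset.univ.filter (fun v => h.some v = h.some 0) else ∅

lemma fbip_eq {n : ℕ} [NeZero n] {G : SimpleGraph (Fin n)} (hc : G.Preconnected)
    (C : G.Coloring Bool) :
    fbip G = Finset.univ.filter (fun v => C v = C 0) := by
  rw [fbip, dif_pos ⟨C⟩]
  exact Finset.filter_congr fun v _ => coloring_agree hc _ C 0 v

lemma card_evens (n : ℕ) :
    (Finset.univ.filter (fun i : Fin n => i.val % 2 = 0)).card = (n+1)/2 := by
  apply Finset.card_eq_of_bijective (fun k hk => ⟨2*k, by omega⟩)
  · intro a ha
    rw [Finset.mem_filter] at ha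
    obtain ⟨-, h2⟩ := ha
    refine ⟨a.val / 2, by omega, ?_⟩
    apply Fin.ext
    simp only [Fin.val_mk]
    omega
  · intro i hi
    simp
  · intro i j hi hj hij
    have := congrArg Fin.val hij
    simp at this; omega

lemma card_odds {n : ℕ} (hne : Even n) :
    (Finset.univ.filter (fun i : Fin n => ¬ i.val % 2 = 0)).card = n / 2 := by
  have h1 := Finset.card_filter_add_card_filter_not
    (s := (Finset.univ : Finset (Fin n))) (p := fun i : Fin n => i.val % 2 = 0)
  rw [card_evens, Finset.card_univ, Fintype.card_fin] at h1
  rw [Nat.even_iff] at hne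
  omega

lemma ham_facts {n : ℕ} [NeZero n] {H : SimpleGraph (Fin n)} (hham : IsHamPathGraph H)
    (hne : Even n) :
    H.Preconnected ∧ ∃ C : H.Coloring Bool,
      (Finset.univ.filter fun v => C v = C 0).card = n / 2 := by
  obtain ⟨σ, hσ⟩ := hham
  let iso : H ≃g pathGraph n := ⟨σ, by intro a b; exact (hσ a b).symm⟩
  have hpre : H.Preconnected := iso.preconnected_iff.mpr (pathGraph_preconnected n)
  refine ⟨hpre, Hom.comp (pathGraph.bicoloring n) iso.toHom, ?_⟩
  have hCval : ∀ v, (Hom.comp (pathGraph.bicoloring n) iso.toHom) v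
      = decide ((σ v).val % 2 = 0) := fun v => rfl
  set c₀ : Bool := (Hom.comp (pathGraph.bicoloring n) iso.toHom) 0 with hc₀
  have hcard : (Finset.univ.filter fun v =>
        (Hom.comp (pathGraph.bicoloring n) iso.toHom) v = c₀).card
      = (Finset.univ.filter fun i : Fin n => decide (i.val % 2 = 0) = c₀).card := by
    apply Finset.card_bij (fun v _ => σ v)
    · intro a ha
      rw [Finset.mem_filter] at ha ⊢
      exact ⟨Finset.mem_univ _, by rw [← hCval]; exact ha.2⟩
    · intro a _ b _ hab
      exact σ.injective hab
    · intro b hb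
      rw [Finset.mem_filter] at hb
      refine ⟨σ.symm b, ?_, σ.apply_symm_apply b⟩
      rw [Finset.mem_filter]
      refine ⟨Finset.mem_univ _, ?_⟩
      rw [hCval, σ.apply_symm_apply]
      exact hb.2
  rw [hcard]
  cases hc : c₀ with
  | true =>
    have : (Finset.univ.filter fun i : Fin n => decide (i.val % 2 = 0) = true)
        = Finset.univ.filter (fun i : Fin n => i.val % 2 = 0) := by
      apply Finset.filter_congr; intro v _; simp
    rw [this, card_evens]
    rw [Nat.even_iff] at hne; omega
  | false =>
    have : (Finset.univ.filter fun i : Fin n => decide (i.val % 2 = 0) = false)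
        = Finset.univ.filter (fun i : Fin n => ¬ i.val % 2 = 0) := by
      apply Finset.filter_congr; intro v _; simp
    rw [this, card_odds hne]

end OddCyc
namespace OddCyc

lemma bool_ne_of_iff {a b c : Bool} (h : (a = c) ↔ (b = c)) (hne : a ≠ b) : False := by
  cases a <;> cases b <;> cases c <;> simp_all

lemma upper {n : ℕ} (hn : 4 ≤ n) (hne : Even n) [NeZero n]
    (F : Finset (SimpleGraph (Fin n)))
    (hham : ∀ G ∈ F, IsHamPathGraph G)
    (hodd : ∀ G₁ ∈ F, ∀ G₂ ∈ F, G₁ ≠ G₂ →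
      ∃ (u : Fin n) (w : (G₁ ⊔ G₂).Walk u u), w.IsCycle ∧ Odd w.length) :
    F.card ≤ (Finset.univ.filter
      (fun S : Finset (Fin n) => S.card = n / 2 ∧ (0 : Fin n) ∈ S)).card := by
  apply Finset.card_le_card_of_injOn fbip
  · intro G hG
    obtain ⟨hpre, C, hcard⟩ := ham_facts (hham G hG) hne
    rw [Finset.mem_coe, Finset.mem_filter, fbip_eq hpre C]
    refine ⟨Finset.mem_univ _, hcard, ?_⟩
    rw [Finset.mem_filter]
    exact ⟨Finset.mem_univ _, rfl⟩
  · intro G₁ h₁ G₂ h₂ hf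
    by_contra hne'
    obtain ⟨u, w, hcyc, hoddw⟩ := hodd G₁ h₁ G₂ h₂ hne'
    obtain ⟨hpre₁, C₁, -⟩ := ham_facts (hham G₁ h₁) hne
    obtain ⟨hpre₂, C₂, -⟩ := ham_facts (hham G₂ h₂) hne
    have m₁ : ∀ v, v ∈ fbip G₁ ↔ C₁ v = C₁ 0 := by
      intro v; rw [fbip_eq hpre₁ C₁, Finset.mem_filter]; simp
    have m₂ : ∀ v, v ∈ fbip G₁ ↔ C₂ v = C₂ 0 := by
      intro v; rw [hf, fbip_eq hpre₂ C₂, Finset.mem_filter]; simp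
    let D : (G₁ ⊔ G₂).Coloring Bool := Coloring.mk (fun v => decide (v ∈ fbip G₁)) (by
      intro a b hab hD
      have hiff : (a ∈ fbip G₁) ↔ (b ∈ fbip G₁) := by
        simpa using hD
      rcases hab with hab | hab
      · exact bool_ne_of_iff ((m₁ a).symm.trans ((hiff.trans (m₁ b)))) (C₁.valid hab)
      · exact bool_ne_of_iff ((m₂ a).symm.trans ((hiff.trans (m₂ b)))) (C₂.valid hab))
    have hev : Even w.length := (D.even_length_iff_congr w).mpr Iff.rfl
    rw [Nat.even_iff] at hev
    rw [Nat.odd_iff] at hoddw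
    omega

end OddCyc

open SimpleGraph Finset

namespace OddCyc

variable {V : Type*} {G : SimpleGraph V}

lemma path_len_one_of_edge {v u : V} {p : G.Walk v u} (hp : p.IsPath)
    (he : s(u,v) ∈ p.edges) : p.length = 1 := by
  cases p with
  | nil => simp at he
  | @cons _ y _ h q =>
    rw [Walk.edges_cons, List.mem_cons] at he
    rcases he with he | he
    · have hyu : y = u := by
        rw [Sym2.eq_iff] at he
        rcases he with ⟨h1, h2⟩ | ⟨h1, h2⟩
        · exact h2.symm.trans h1.symm
        · exact h1.symm
      subst hyu
      have h2 := (Walk.cons_isPath_iff _ _).mp hp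
      have h3 : q = Walk.nil := (Walk.isPath_iff_eq_nil).mp h2.1
      subst h3; rfl
    · exfalso
      have hv : v ∈ q.support := Walk.snd_mem_support_of_mem_edges q he
      exact ((Walk.cons_isPath_iff _ _).mp hp).2 hv

lemma exists_odd_cycle [DecidableEq V] :
    ∀ (L : ℕ) {u : V} (w : G.Walk u u), w.length = L → Odd w.length →
    ∃ (x : V) (c : G.Walk x x), c.IsCycle ∧ Odd c.length := by
  intro L
  induction L using Nat.strong_induction_on with
  | _ L ih =>
    intro u w hL hodd
    cases w with
    | nil => simp [Nat.odd_iff] at hodd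
    | @cons _ v _ h p =>
      by_cases hp : p.IsPath
      · by_cases he : s(u,v) ∈ p.edges
        · have h1 := path_len_one_of_edge hp he
          rw [Walk.length_cons, h1] at hodd
          simp [Nat.odd_iff] at hodd
        · exact ⟨u, Walk.cons h p, (Walk.cons_isCycle_iff p h).mpr ⟨hp, he⟩, hodd⟩
      · have hnd : ¬ p.support.Nodup := fun hn => hp (Walk.IsPath.mk' hn)
        rw [List.nodup_iff_count_le_one] at hnd
        push_neg at hnd
        obtain ⟨x, hx2⟩ := hnd
        have hxs : x ∈ p.support := by
          rw [← List.count_pos_iff]; omega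
        have hspec := (p.take_spec hxs).symm
        have hcnt := p.count_support_takeUntil_eq_one hxs
        have hxd : x ∈ (p.dropUntil x hxs).support.tail := by
          have hc : p.support.count x
              = (p.takeUntil x hxs).support.count x
                + ((p.dropUntil x hxs).support.tail.count x) := by
            conv_lhs => rw [hspec]
            rw [Walk.support_append, List.count_append]
          rw [← List.count_pos_iff]
          omega
        set a := p.takeUntil x hxs with haa
        set d := p.dropUntil x hxs with hdd
        cases hd : d with
        | nil => rw [hd] at hxd; simp at hxd
        | @cons _ y _ h₂ d₂ =>
          rw [hd] at hxd
          rw [Walk.support_cons] at hxd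
          simp only [List.tail_cons] at hxd
          -- split d₂ at x
          have hspec2 := (d₂.take_spec hxd).symm
          set b₀ := d₂.takeUntil x hxd with hb₀
          set c := d₂.dropUntil x hxd with hcc
          -- the two closed walks
          have hlen : (Walk.cons h p).length = (Walk.cons h (a.append c)).length
              + (Walk.cons h₂ b₀).length := by
            conv_lhs => rw [hspec, hd, hspec2]
            simp [Walk.length_append, Walk.length_cons]
            omega
          have hlw' : (Walk.cons h (a.append c)).length ≥ 1 := by
            simp [Walk.length_cons]
          have hlb : (Walk.cons h₂ b₀).length ≥ 1 := by
            simp [Walk.length_cons]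
          rcases Nat.even_or_odd (Walk.cons h (a.append c)).length with hev | hod
          · have hob : Odd (Walk.cons h₂ b₀).length := by
              rw [Nat.odd_iff] at hodd ⊢
              rw [Nat.even_iff] at hev
              omega
            exact ih (Walk.cons h₂ b₀).length (by omega) _ rfl hob
          · exact ih (Walk.cons h (a.append c)).length (by omega) _ rfl hod

end OddCyc
namespace OddCyc

lemma exists_ham {n : ℕ} [NeZero n] (hne : Even n) (S : Finset (Fin n))
    (h1 : S.card = n / 2) (h2 : (0 : Fin n) ∈ S) :
    ∃ H : SimpleGraph (Fin n), IsHamPathGraph H ∧ fbip H = S := by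
  classical
  set E := Finset.univ.filter (fun i : Fin n => i.val % 2 = 0) with hE
  have hEc : E.card = n / 2 := by
    rw [hE, card_evens]; rw [Nat.even_iff] at hne; omega
  have e₁ : {x // x ∈ S} ≃ {x // x ∈ E} := Fintype.equivOfCardEq (by
    rw [Fintype.card_coe, Fintype.card_coe, h1, hEc])
  have e₂ : {x // ¬ x ∈ S} ≃ {x // ¬ x ∈ E} := Fintype.equivOfCardEq (by
    rw [Fintype.card_subtype_compl, Fintype.card_subtype_compl,
      Fintype.card_coe, Fintype.card_coe, h1, hEc])
  set σ : Equiv.Perm (Fin n) := Equiv.subtypeCongr e₁ e₂ with hσdef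
  have hmem : ∀ v : Fin n, ((σ v).val % 2 = 0) ↔ v ∈ S := by
    intro v
    by_cases hv : v ∈ S
    · have hval : σ v = (e₁ ⟨v, hv⟩ : {x // x ∈ E}).val := by
        simp [hσdef, Equiv.subtypeCongr, hv]
      have h0 : (↑(e₁ ⟨v, hv⟩) : Fin n) ∈
          Finset.filter (fun i : Fin n => i.val % 2 = 0) Finset.univ :=
        (e₁ ⟨v, hv⟩).property
      have h0' := (Finset.mem_filter.mp h0).2
      simp only [hval]
      exact ⟨fun _ => hv, fun _ => h0'⟩
    · have hval : σ v = (e₂ ⟨v, hv⟩ : {x // ¬ x ∈ E}).val := by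
        simp [hσdef, Equiv.subtypeCongr, hv]
      have h0 : ¬ ((↑(e₂ ⟨v, hv⟩) : Fin n) ∈
          Finset.filter (fun i : Fin n => i.val % 2 = 0) Finset.univ) :=
        (e₂ ⟨v, hv⟩).property
      rw [Finset.mem_filter] at h0
      push_neg at h0
      have h0' := h0 (Finset.mem_univ _)
      simp only [hval]
      exact ⟨fun h => absurd h h0', fun h => absurd h hv⟩
  refine ⟨(pathGraph n).comap σ, ⟨σ, fun a b => Iff.rfl⟩, ?_⟩
  let iso : (pathGraph n).comap σ ≃g pathGraph n := ⟨σ, Iff.rfl⟩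
  have hpre : ((pathGraph n).comap σ).Preconnected :=
    iso.preconnected_iff.mpr (pathGraph_preconnected n)
  let C : ((pathGraph n).comap σ).Coloring Bool :=
    SimpleGraph.Hom.comp (SimpleGraph.pathGraph.bicoloring n) iso.toHom
  have hCval : ∀ v, C v = decide ((σ v).val % 2 = 0) := fun v => rfl
  rw [fbip_eq hpre C]
  have hC0 : C 0 = true := by
    rw [hCval, decide_eq_true_eq, hmem]; exact h2
  ext v
  rw [Finset.mem_filter, hC0, hCval, decide_eq_true_eq, hmem]
  simp

lemma lower {n : ℕ} (hn : 4 ≤ n) (hne : Even n) [NeZero n] :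
    ∃ F : Finset (SimpleGraph (Fin n)),
      F.card = (Finset.univ.filter
        (fun S : Finset (Fin n) => S.card = n / 2 ∧ (0 : Fin n) ∈ S)).card ∧
      (∀ G ∈ F, IsHamPathGraph G) ∧
      ∀ G₁ ∈ F, ∀ G₂ ∈ F, G₁ ≠ G₂ →
        ∃ (u : Fin n) (w : (G₁ ⊔ G₂).Walk u u), w.IsCycle ∧ Odd w.length := by
  classical
  set T := Finset.univ.filter
    (fun S : Finset (Fin n) => S.card = n / 2 ∧ (0 : Fin n) ∈ S) with hT
  have hex : ∀ S : Finset (Fin n), S ∈ T → ∃ H, IsHamPathGraph H ∧ fbip H = S := by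
    intro S hS
    rw [hT, Finset.mem_filter] at hS
    exact exists_ham hne S hS.2.1 hS.2.2
  choose g hg1 hg2 using hex
  refine ⟨T.attach.image (fun s => g s.1 s.2), ?_, ?_, ?_⟩
  · rw [Finset.card_image_of_injOn, Finset.card_attach]
    intro s _ t _ hst
    refine Subtype.ext ?_
    rw [← hg2 s.1 s.2, ← hg2 t.1 t.2]
    exact congrArg fbip hst
  · intro G hG
    obtain ⟨s, -, rfl⟩ := Finset.mem_image.mp hG
    exact hg1 s.1 s.2
  · intro G₁ hG₁ G₂ hG₂ hne'
    obtain ⟨s₁, -, rfl⟩ := Finset.mem_image.mp hG₁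
    obtain ⟨s₂, -, rfl⟩ := Finset.mem_image.mp hG₂
    have hfne : fbip (g s₁.1 s₁.2) ≠ fbip (g s₂.1 s₂.2) := by
      rw [hg2, hg2]
      intro h
      exact hne' (by rw [Subtype.ext h])
    set G₁ := g s₁.1 s₁.2
    set G₂ := g s₂.1 s₂.2
    have hpre₁ : G₁.Preconnected := (ham_facts (hg1 s₁.1 s₁.2) hne).1
    have hpre₂ : G₂.Preconnected := (ham_facts (hg1 s₂.1 s₂.2) hne).1
    have hpre : (G₁ ⊔ G₂).Preconnected := hpre₁.mono le_sup_left
    by_contra hno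
    push_neg at hno
    have hnow : ∀ (x : Fin n) (c : (G₁ ⊔ G₂).Walk x x), ¬ Odd c.length := by
      intro x c hoc
      obtain ⟨y, cyc, hc1, hc2⟩ := exists_odd_cycle c.length c rfl hoc
      exact (hno y cyc hc1) hc2
    set wlk : ∀ v : Fin n, (G₁ ⊔ G₂).Walk 0 v := fun v => (hpre 0 v).some with hwlk
    let D : (G₁ ⊔ G₂).Coloring Bool := Coloring.mk
      (fun v => decide (Odd (wlk v).length)) (by
        intro a b hab hD
        simp only [decide_eq_decide] at hD
        apply hnow 0 ((wlk a).append (Walk.cons hab (wlk b).reverse))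
        rw [Walk.length_append, Walk.length_cons, Walk.length_reverse]
        by_cases hla : Odd (wlk a).length
        · have hlb : Odd (wlk b).length := hD.mp hla
          rw [Nat.odd_iff] at hla hlb ⊢
          omega
        · have hlb : ¬ Odd (wlk b).length := fun hb => hla (hD.mpr hb)
          rw [Nat.odd_iff] at hla hlb ⊢
          omega)
    have e1 : fbip G₁ = Finset.univ.filter (fun v => D v = D 0) :=
      fbip_eq hpre₁ (SimpleGraph.Hom.comp D (SimpleGraph.Hom.ofLE le_sup_left))
    have e2 : fbip G₂ = Finset.univ.filter (fun v => D v = D 0) :=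
      fbip_eq hpre₂ (SimpleGraph.Hom.comp D (SimpleGraph.Hom.ofLE le_sup_right))
    exact hfne (e1.trans e2.symm)

end OddCyc
namespace OddCyc

lemma count_T {n : ℕ} (hn : 4 ≤ n) (hne : Even n) [NeZero n] :
    2 * (Finset.univ.filter
      (fun S : Finset (Fin n) => S.card = n / 2 ∧ (0 : Fin n) ∈ S)).card
    = n.choose (n / 2) := by
  classical
  have hA : (Finset.univ.filter (fun S : Finset (Fin n) => S.card = n / 2)).card
      = n.choose (n / 2) := by
    have h := Finset.card_powersetCard (n / 2) (Finset.univ : Finset (Fin n))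
    rw [Finset.card_univ, Fintype.card_fin] at h
    rw [← h, Finset.powersetCard_eq_filter, Finset.powerset_univ]
  have hsplit := Finset.card_filter_add_card_filter_not
    (s := Finset.univ.filter (fun S : Finset (Fin n) => S.card = n / 2))
    (p := fun S => (0 : Fin n) ∈ S)
  rw [Finset.filter_filter, Finset.filter_filter] at hsplit
  have hbij : (Finset.univ.filter
        (fun S : Finset (Fin n) => S.card = n / 2 ∧ (0 : Fin n) ∈ S)).card
      = (Finset.univ.filter
        (fun S : Finset (Fin n) => S.card = n / 2 ∧ ¬ (0 : Fin n) ∈ S)).card := by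
    have hn2 : n % 2 = 0 := Nat.even_iff.mp hne
    refine Finset.card_bij' (fun S _ => Sᶜ) (fun S _ => Sᶜ) ?_ ?_
      (fun S _ => compl_compl S) (fun S _ => compl_compl S)
    · intro S hS
      rw [Finset.mem_filter] at hS ⊢
      obtain ⟨-, hc, h0⟩ := hS
      refine ⟨Finset.mem_univ _, ?_, ?_⟩
      · rw [Finset.card_compl, Fintype.card_fin, hc]; omega
      · rw [Finset.mem_compl]; simp [h0]
    · intro S hS
      rw [Finset.mem_filter] at hS ⊢
      obtain ⟨-, hc, h0⟩ := hS
      refine ⟨Finset.mem_univ _, ?_, ?_⟩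
      · rw [Finset.card_compl, Fintype.card_fin, hc]; omega
      · rw [Finset.mem_compl]; simpa using h0
  omega

end OddCyc


open OddCyc in
/-- For even `n ≥ 4`, the maximum number of Hamiltonian paths of `K_n` whose
pairwise unions contain an odd cycle equals `(1/2) * C(n, n/2)`. -/
theorem stmt_1 (n : ℕ) (hn : 4 ≤ n) (hne : Even n) :
    2 * sSup {m | ∃ F : Finset (SimpleGraph (Fin n)), F.card = m ∧
      (∀ G ∈ F, IsHamPathGraph G) ∧
      ∀ G₁ ∈ F, ∀ G₂ ∈ F, G₁ ≠ G₂ →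
        ∃ (u : Fin n) (w : (G₁ ⊔ G₂).Walk u u), w.IsCycle ∧ Odd w.length}
      = n.choose (n / 2) := by
  haveI : NeZero n := ⟨by omega⟩
  set M := {m | ∃ F : Finset (SimpleGraph (Fin n)), F.card = m ∧
      (∀ G ∈ F, IsHamPathGraph G) ∧
      ∀ G₁ ∈ F, ∀ G₂ ∈ F, G₁ ≠ G₂ →
        ∃ (u : Fin n) (w : (G₁ ⊔ G₂).Walk u u), w.IsCycle ∧ Odd w.length} with hM
  have hub : ∀ m ∈ M, m ≤ (Finset.univ.filter
      (fun S : Finset (Fin n) => S.card = n / 2 ∧ (0 : Fin n) ∈ S)).card := by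
    rintro m ⟨F, rfl, h1, h2⟩
    exact upper hn hne F h1 h2
  have hmem : (Finset.univ.filter
      (fun S : Finset (Fin n) => S.card = n / 2 ∧ (0 : Fin n) ∈ S)).card ∈ M := by
    obtain ⟨F, hc, h1, h2⟩ := lower hn hne
    exact ⟨F, hc, h1, h2⟩
  have h0 : (0 : ℕ) ∈ M := ⟨∅, by simp⟩
  have hsup : sSup M = (Finset.univ.filter
      (fun S : Finset (Fin n) => S.card = n / 2 ∧ (0 : Fin n) ∈ S)).card :=
    le_antisymm (csSup_le ⟨0, h0⟩ hub) (le_csSup ⟨_, hub⟩ hmem)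
  rw [hsup, count_T hn hne]
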